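/- arXiv:1210.4352 — 9 statements merged into one kernel-verified Lean document; each statement's English description precedes it below -/
import Mathlib

section
/- Let G=(V,E) be a finite simple graph and let the six distinct vertices v_1,…,v_6 build an AP_6 in G (that is, v_1v_2, v_3v_4, v_5v_6 ∉ E and v_2v_3, v_4v_5, v_6v_1 ∈ E). Assume that among the three edges v_2v_3, v_4v_5, v_6v_1 of this AP_6, no pair of edges is in conflict. Then the edges v_3v_6, v_4v_1, v_5v_2 exist in G, and moreover v_4v_5 || v_3v_6, v_2v_3 || v_4v_1, and v_6v_1 || v_5v_2. -/
open SimpleGraph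

/-- Two edges `e`, `f` of a simple graph `G` are *in conflict* (written `e ‖ f` in the paper):
their endpoints can be written `e = v₁v₂`, `f = v₃v₄` with `v₁v₄ ∉ E` and `v₂v₃ ∉ E`,
so that the four (distinct) vertices build an alternating cycle `AC₄`
(one of `2K₂`, `P₄`, `C₄`). -/
def Sym2Conflict {V : Type*} (G : SimpleGraph V) (e f : Sym2 V) : Prop :=
  ∃ a b c d : V, e = s(a, b) ∧ f = s(c, d) ∧
    G.Adj a b ∧ G.Adj c d ∧ ¬ G.Adj a d ∧ ¬ G.Adj b c ∧
    a ≠ c ∧ a ≠ d ∧ b ≠ c ∧ b ≠ d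

/-- The conflict graph `G*` of `G` (whose vertices are the edges of `G`, two of them adjacent
iff the corresponding edges are in conflict) is bipartite, i.e. `χ(G*) ≤ 2`:
there is a `2`-coloring of the edges of `G` such that conflicting edges get different colors. -/
def ConflictGraphBipartite {V : Type*} (G : SimpleGraph V) : Prop :=
  ∃ χ : Sym2 V → Bool, ∀ e f, Sym2Conflict G e f → χ e ≠ χ f

/-- `χ` is a proper 2-coloring of the vertices of the conflict graph `G*`. -/
def ProperConflictColoring {V : Type*} (G : SimpleGraph V) (χ : Sym2 V → Bool) : Prop :=
  ∀ e f, Sym2Conflict G e f → χ e ≠ χ f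

/-- `e` and `f` lie in the same connected component of the conflict graph `G*`. -/
def SameComp {V : Type*} (G : SimpleGraph V) (e f : Sym2 V) : Prop :=
  Relation.ReflTransGen (Sym2Conflict G) e f

/-- The literals of `e` and `f` (w.r.t. the proper 2-coloring `χ` of the conflict graph)
are equal: same connected component of `G*` and same color. -/
def SameLit {V : Type*} (G : SimpleGraph V) (χ : Sym2 V → Bool) (e f : Sym2 V) : Prop :=
  SameComp G e f ∧ χ e = χ f

/-- The literal of `e` is the negation of the literal of `f`: same connected component of the
conflict graph `G*`, different colors. -/
def OppLit {V : Type*} (G : SimpleGraph V) (χ : Sym2 V → Bool) (e f : Sym2 V) : Prop :=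
  SameComp G e f ∧ χ e ≠ χ f

/-- Six (not necessarily distinct) vertices `v₁,…,v₆` build an alternating cycle `AC₆` in `G`:
`v₁v₂, v₃v₄, v₅v₆ ∉ E` and `v₂v₃, v₄v₅, v₆v₁ ∈ E`. -/
def IsAC6 {V : Type*} (G : SimpleGraph V) (v1 v2 v3 v4 v5 v6 : V) : Prop :=
  ¬ G.Adj v1 v2 ∧ ¬ G.Adj v3 v4 ∧ ¬ G.Adj v5 v6 ∧
    G.Adj v2 v3 ∧ G.Adj v4 v5 ∧ G.Adj v6 v1

/-- `G` has an alternating cycle `AC_{2k}` in the edge subset `F`: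
`2k` (not necessarily distinct) vertices `w 0, …, w (2k-1)` with
`w i — w (i+1)` an edge of `F` for odd `i` and a non-edge of `G` for even `i`
(indices mod `2k`). -/
def HasAltCycle {V : Type*} (G : SimpleGraph V) (F : Set (Sym2 V)) (k : ℕ) : Prop :=
  ∃ w : ℕ → V, ∀ i < 2 * k,
    (Odd i → s(w i, w ((i + 1) % (2 * k))) ∈ F) ∧
    (Even i → ¬ G.Adj (w i) (w ((i + 1) % (2 * k))))

/-- `G` is a threshold graph: there are real weights `a` with `uv ∈ E ↔ a u + a v ≥ 1`
for all distinct `u`, `v`. -/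
def IsThresholdGraph {V : Type*} (G : SimpleGraph V) : Prop :=
  ∃ a : V → ℝ, ∀ u v : V, u ≠ v → (G.Adj u v ↔ 1 ≤ a u + a v)

/-- The edge set of `G` is the union of the edge sets of `k` threshold graphs on `V`. -/
def HasThresholdCover {V : Type*} (G : SimpleGraph V) (k : ℕ) : Prop :=
  ∃ f : Fin k → SimpleGraph V, (∀ i, IsThresholdGraph (f i)) ∧
    ∀ u v, G.Adj u v ↔ ∃ i, (f i).Adj u v

/-- The threshold cover number `t(G)`: the smallest (positive) `k` such that the edge set
of `G` is the union of the edge sets of `k` threshold graphs. -/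
noncomputable def thresholdCoverNumber {V : Type*} (G : SimpleGraph V) : ℕ :=
  sInf {k | 0 < k ∧ HasThresholdCover G k}

/-- A bipartite graph, given as a relation `E : α → β → Prop` between its two color classes,
is a *chain graph*: the neighborhoods of any two vertices in the same color class are
comparable under inclusion. -/
def IsChainRel {α β : Type*} (E : α → β → Prop) : Prop :=
  (∀ a a' : α, (∀ b, E a b → E a' b) ∨ (∀ b, E a' b → E a b)) ∧
  (∀ b b' : β, (∀ a, E a b → E a b') ∨ (∀ a, E a b' → E a b))

/-- The edge set of the bipartite graph `E` is the union of the edge sets of `k` chain graphs. -/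
def HasChainCover {α β : Type*} (E : α → β → Prop) (k : ℕ) : Prop :=
  ∃ f : Fin k → α → β → Prop, (∀ i, IsChainRel (f i)) ∧
    ∀ a b, E a b ↔ ∃ i, f i a b

/-- The chain cover number `ch(G)` of a bipartite graph. -/
noncomputable def chainCoverNumber {α β : Type*} (E : α → β → Prop) : ℕ :=
  sInf {k | 0 < k ∧ HasChainCover E k}

/-- `G` is a split graph: its vertex set can be partitioned into a clique and an
independent set. -/
def IsSplitGraph {V : Type*} (G : SimpleGraph V) : Prop :=
  ∃ K : Set V, (∀ u ∈ K, ∀ v ∈ K, u ≠ v → G.Adj u v) ∧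
    ∀ u ∉ K, ∀ v ∉ K, ¬ G.Adj u v

/-- `P` is an interval order: each element gets a real interval `[l x, r x]` such that
`P x y` iff the interval of `x` lies entirely to the left of the interval of `y`. -/
def IsIntervalOrder {U : Type*} (P : U → U → Prop) : Prop :=
  ∃ l r : U → ℝ, (∀ x, l x ≤ r x) ∧ ∀ x y, P x y ↔ r x < l y

/-- `P` is a (strict) partial order: irreflexive and transitive. -/
def IsPartialOrderRel {U : Type*} (P : U → U → Prop) : Prop :=
  (∀ x, ¬ P x x) ∧ ∀ x y z, P x y → P y z → P x z

/-- `P` is a linear order: a partial order in which any two distinct elements are comparable. -/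
def IsLinearOrderRel {U : Type*} (P : U → U → Prop) : Prop :=
  IsPartialOrderRel P ∧ ∀ x y : U, x ≠ y → P x y ∨ P y x

/-- A bipartite graph `E` on color classes `U = V = Fin n` (containing the perfect matching
`E₀ = {uᵢvᵢ}`) is *linear-interval coverable*: `E = E₁ ∪ E₂` for chain graphs `E₁`, `E₂`
with `E₀ ⊆ E₂ \ E₁`. -/
def LinearIntervalCoverable (n : ℕ) (E : Fin n → Fin n → Prop) : Prop :=
  ∃ E1 E2 : Fin n → Fin n → Prop,
    IsChainRel E1 ∧ IsChainRel E2 ∧ (∀ i j, E i j ↔ E1 i j ∨ E2 i j) ∧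
    ∀ i, E2 i i ∧ ¬ E1 i i

/-- The associated split graph `H_G` of a bipartite graph `G = (α, β, E)`:
the graph on `α ⊕ β` obtained from `G` by turning the color class `β` into a clique. -/
def assocSplitGraph {α β : Type*} (E : α → β → Prop) : SimpleGraph (α ⊕ β) where
  Adj x y := match x, y with
    | Sum.inl _, Sum.inl _ => False
    | Sum.inl a, Sum.inr b => E a b
    | Sum.inr b, Sum.inl a => E a b
    | Sum.inr b, Sum.inr b' => b ≠ b'
  symm := by
    constructor
    rintro (a | b) (a' | b') h
    · exact h
    · exact h
    · exact h
    · exact Ne.symm h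
  loopless := by
    constructor
    rintro (a | b) h
    · exact h
    · exact h rfl

/-- The split graph `H` of the Setting: the associated split graph of `G̃ = Ĉ(P)`,
the bipartite complement of the domination bipartite graph of `P`. -/
def paperH {n : ℕ} (P : Fin n → Fin n → Prop) : SimpleGraph (Fin n ⊕ Fin n) :=
  assocSplitGraph (fun i j : Fin n => ¬ P i j)

/-- The split graph `H − E₀` of the Setting: `H` with the perfect matching
`E₀ = {uᵢvᵢ}` deleted. -/
def paperHminusE0 {n : ℕ} (P : Fin n → Fin n → Prop) : SimpleGraph (Fin n ⊕ Fin n) :=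
  assocSplitGraph (fun i j : Fin n => ¬ P i j ∧ i ≠ j)

/-- `G` has an `AP₅`: an `AC₆` with `vᵢ = vᵢ₊₃` for some `i`, having exactly five
distinct vertices. -/
def HasAP5 {V : Type*} [DecidableEq V] (G : SimpleGraph V) : Prop :=
  ∃ v1 v2 v3 v4 v5 v6 : V,
    (v1 = v4 ∨ v2 = v5 ∨ v3 = v6) ∧
    ({v1, v2, v3, v4, v5, v6} : Finset V).card = 5 ∧
    IsAC6 G v1 v2 v3 v4 v5 v6

/-- `G` has a double `AP₆`: an `AP₆` (an `AC₆` on six distinct vertices) containing in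
addition the edges `v₁v₃, v₂v₆`, or `v₃v₅, v₄v₂`, or `v₅v₁, v₆v₄`. -/
def HasDoubleAP6 {V : Type*} (G : SimpleGraph V) : Prop :=
  ∃ v1 v2 v3 v4 v5 v6 : V,
    List.Pairwise (· ≠ ·) [v1, v2, v3, v4, v5, v6] ∧
    IsAC6 G v1 v2 v3 v4 v5 v6 ∧
    ((G.Adj v1 v3 ∧ G.Adj v2 v6) ∨ (G.Adj v3 v5 ∧ G.Adj v4 v2) ∨
      (G.Adj v5 v1 ∧ G.Adj v6 v4))

/-- Lemma: AP₆ with no pair of its edges in conflict. -/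
theorem statement_0 {V : Type*} [Fintype V] (G : SimpleGraph V)
    (v1 v2 v3 v4 v5 v6 : V)
    (hdist : List.Pairwise (· ≠ ·) [v1, v2, v3, v4, v5, v6])
    (h12 : ¬ G.Adj v1 v2) (h34 : ¬ G.Adj v3 v4) (h56 : ¬ G.Adj v5 v6)
    (h23 : G.Adj v2 v3) (h45 : G.Adj v4 v5) (h61 : G.Adj v6 v1)
    (hc1 : ¬ Sym2Conflict G s(v2, v3) s(v4, v5))
    (hc2 : ¬ Sym2Conflict G s(v2, v3) s(v6, v1))
    (hc3 : ¬ Sym2Conflict G s(v4, v5) s(v6, v1)) :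
    G.Adj v3 v6 ∧ G.Adj v4 v1 ∧ G.Adj v5 v2 ∧
    Sym2Conflict G s(v4, v5) s(v3, v6) ∧
    Sym2Conflict G s(v2, v3) s(v4, v1) ∧
    Sym2Conflict G s(v6, v1) s(v5, v2) := by
  simp only [List.pairwise_cons, List.mem_cons, List.mem_singleton,
    List.not_mem_nil] at hdist
  obtain ⟨h1, h2, h3, h4, h5, -⟩ := hdist
  have n12 : v1 ≠ v2 := h1 _ (by simp)
  have n13 : v1 ≠ v3 := h1 _ (by simp)
  have n14 : v1 ≠ v4 := h1 _ (by simp)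
  have n15 : v1 ≠ v5 := h1 _ (by simp)
  have n16 : v1 ≠ v6 := h1 _ (by simp)
  have n23 : v2 ≠ v3 := h2 _ (by simp)
  have n24 : v2 ≠ v4 := h2 _ (by simp)
  have n25 : v2 ≠ v5 := h2 _ (by simp)
  have n26 : v2 ≠ v6 := h2 _ (by simp)
  have n34 : v3 ≠ v4 := h3 _ (by simp)
  have n35 : v3 ≠ v5 := h3 _ (by simp)
  have n36 : v3 ≠ v6 := h3 _ (by simp)
  have n45 : v4 ≠ v5 := h4 _ (by simp)
  have n46 : v4 ≠ v6 := h4 _ (by simp)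
  have n56 : v5 ≠ v6 := h5 _ (by simp)
  have e36 : G.Adj v3 v6 := by
    by_contra h
    exact hc2 ⟨v3, v2, v1, v6, Sym2.eq_swap, Sym2.eq_swap, h23.symm, h61.symm,
      h, fun hadj => h12 hadj.symm, n13.symm, n36, n12.symm, n26⟩
  have e41 : G.Adj v4 v1 := by
    by_contra h
    exact hc3 ⟨v4, v5, v6, v1, rfl, rfl, h45, h61,
      h, h56, n46, n14.symm, n56, n15.symm⟩
  have e52 : G.Adj v5 v2 := by
    by_contra h
    exact hc1 ⟨v3, v2, v5, v4, Sym2.eq_swap, Sym2.eq_swap, h23.symm, h45.symm,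
      h34, fun hadj => h hadj.symm, n35, n34, n25, n24⟩
  refine ⟨e36, e41, e52, ?_, ?_, ?_⟩
  · exact ⟨v4, v5, v6, v3, rfl, Sym2.eq_swap, h45, e36.symm,
      fun hadj => h34 hadj.symm, h56, n46, n34.symm, n56, n35.symm⟩
  · exact ⟨v2, v3, v4, v1, rfl, rfl, h23, e41,
      fun hadj => h12 hadj.symm, h34, n24, n12.symm, n34, n13.symm⟩
  · exact ⟨v6, v1, v2, v5, rfl, Sym2.eq_swap, h61, e52.symm,
      fun hadj => h56 hadj.symm, h12,
      n26.symm, n56.symm, n12, n15⟩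
end

section
/- Any split graph G contains no AP_5 and no double AP_6. -/
open SimpleGraph

lemma card4_aux {V : Type*} [DecidableEq V] (a b c d : V) :
    ({a, b, c, d} : Finset V).card ≤ 4 := by
  have h1 := Finset.card_insert_le a ({b, c, d} : Finset V)
  have h2 := Finset.card_insert_le b ({c, d} : Finset V)
  have h3 := Finset.card_insert_le c ({d} : Finset V)
  have h4 : ({d} : Finset V).card = 1 := Finset.card_singleton d
  omega

lemma ap5_core {V : Type*} (G : SimpleGraph V) (K : Set V)
    (hK : ∀ u ∈ K, ∀ v ∈ K, u ≠ v → G.Adj u v)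
    (hI : ∀ u ∉ K, ∀ v ∉ K, ¬ G.Adj u v)
    (v1 v2 v3 v5 v6 : V) (h56 : v5 ≠ v6)
    (h12 : ¬ G.Adj v1 v2) (h13 : ¬ G.Adj v3 v1) (h56n : ¬ G.Adj v5 v6)
    (e23 : G.Adj v2 v3) (e15 : G.Adj v1 v5) (e61 : G.Adj v6 v1) : False := by
  have hv1K : v1 ∈ K := by
    by_contra h1
    have h5 : v5 ∈ K := by by_contra h5; exact hI v1 h1 v5 h5 e15
    have h6 : v6 ∈ K := by by_contra h6; exact hI v6 h6 v1 h1 e61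
    exact h56n (hK v5 h5 v6 h6 h56)
  have d12 : v1 ≠ v2 := by rintro rfl; exact h13 e23.symm
  have d13 : v1 ≠ v3 := by rintro rfl; exact h12 e23.symm
  have hv2 : v2 ∉ K := fun h2 => h12 (hK v1 hv1K v2 h2 d12)
  have hv3 : v3 ∉ K := fun h3 => h13 ((hK v1 hv1K v3 h3 d13).symm)
  exact hI v2 hv2 v3 hv3 e23

lemma dap6_core {V : Type*} (G : SimpleGraph V) (K : Set V)
    (hK : ∀ u ∈ K, ∀ v ∈ K, u ≠ v → G.Adj u v)
    (hI : ∀ u ∉ K, ∀ v ∉ K, ¬ G.Adj u v)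
    (v1 v2 v3 v4 v5 v6 : V)
    (d12 : v1 ≠ v2) (d34 : v3 ≠ v4) (d56 : v5 ≠ v6)
    (n12 : ¬ G.Adj v1 v2) (n34 : ¬ G.Adj v3 v4) (n56 : ¬ G.Adj v5 v6)
    (e23 : G.Adj v2 v3) (e45 : G.Adj v4 v5) (e61 : G.Adj v6 v1)
    (e13 : G.Adj v1 v3) (e26 : G.Adj v2 v6) : False := by
  have h36 : v3 ∈ K ∧ v6 ∈ K := by
    by_cases h1 : v1 ∈ K
    · have h2 : v2 ∉ K := fun h2 => n12 (hK v1 h1 v2 h2 d12)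
      constructor
      · by_contra h3; exact hI v2 h2 v3 h3 e23
      · by_contra h6; exact hI v2 h2 v6 h6 e26
    · constructor
      · by_contra h3; exact hI v1 h1 v3 h3 e13
      · by_contra h6; exact hI v6 h6 v1 h1 e61
  have h4 : v4 ∉ K := fun h4 => n34 (hK v3 h36.1 v4 h4 d34)
  have h5 : v5 ∉ K := fun h5 => n56 (hK v5 h5 v6 h36.2 d56)
  exact hI v4 h4 v5 h5 e45

/-- Lemma: a split graph contains no `AP₅` and no double `AP₆`. -/
theorem statement_2 {V : Type*} [Fintype V] [DecidableEq V] (G : SimpleGraph V)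
    (hG : IsSplitGraph G) : ¬ HasAP5 G ∧ ¬ HasDoubleAP6 G := by
  obtain ⟨K, hK, hI⟩ := hG
  constructor
  · rintro ⟨v1, v2, v3, v4, v5, v6, hid, hcard, n12, n34, n56, e23, e45, e61⟩
    rcases hid with rfl | rfl | rfl
    · -- v1 = v4 (v4 replaced by v1)
      have h56 : v5 ≠ v6 := by
        rintro rfl
        have hsub : ({v1, v2, v3, v1, v5, v5} : Finset V) ⊆ {v1, v2, v3, v5} := by
          intro x hx; simp only [Finset.mem_insert, Finset.mem_singleton] at hx ⊢; tauto
        have := (Finset.card_le_card hsub).trans (card4_aux v1 v2 v3 v5)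
        omega
      exact ap5_core G K hK hI v1 v2 v3 v5 v6 h56 n12 n34 n56 e23 e45 e61
    · -- v2 = v5 (v5 replaced by v2)
      have h34 : v3 ≠ v4 := by
        rintro rfl
        have hsub : ({v1, v2, v3, v3, v2, v6} : Finset V) ⊆ {v1, v2, v3, v6} := by
          intro x hx; simp only [Finset.mem_insert, Finset.mem_singleton] at hx ⊢; tauto
        have := (Finset.card_le_card hsub).trans (card4_aux v1 v2 v3 v6)
        omega
      exact ap5_core G K hK hI v2 v6 v1 v3 v4 h34 n56 n12 n34 e61 e23 e45
    · -- v3 = v6 (v6 replaced by v3)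
      have h12 : v1 ≠ v2 := by
        rintro rfl
        have hsub : ({v1, v1, v3, v4, v5, v3} : Finset V) ⊆ {v1, v3, v4, v5} := by
          intro x hx; simp only [Finset.mem_insert, Finset.mem_singleton] at hx ⊢; tauto
        have := (Finset.card_le_card hsub).trans (card4_aux v1 v3 v4 v5)
        omega
      exact ap5_core G K hK hI v3 v4 v5 v1 v2 h12 n34 n56 n12 e45 e61 e23
  · rintro ⟨v1, v2, v3, v4, v5, v6, hpw, ⟨n12, n34, n56, e23, e45, e61⟩, hextra⟩
    simp only [List.pairwise_cons] at hpw
    have d12 : v1 ≠ v2 := by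
      have := hpw.1 v2; simp at this; tauto
    have d34 : v3 ≠ v4 := by
      have h := hpw.2.2.1 v4; simp at h; tauto
    have d56 : v5 ≠ v6 := by
      have h := hpw.2.2.2.2.1 v6; simp at h; tauto
    rcases hextra with ⟨e13, e26⟩ | ⟨e35, e42⟩ | ⟨e51, e64⟩
    · exact dap6_core G K hK hI v1 v2 v3 v4 v5 v6 d12 d34 d56 n12 n34 n56 e23 e45 e61 e13 e26
    · exact dap6_core G K hK hI v3 v4 v5 v6 v1 v2 d34 d56 d12 n34 n56 n12 e45 e61 e23 e35 e42
    · exact dap6_core G K hK hI v5 v6 v1 v2 v3 v4 d56 d12 d34 n56 n12 n34 e61 e23 e45 e51 e64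
end

section
/- Let P be a partial order on the finite set U = {u_1,…,u_n}. Then P is a linear order if and only if the bipartite graph NC(P) is a chain graph. -/
open SimpleGraph

/-- Lemma: `P` is a linear order iff `NC(P)` is a chain graph. -/
theorem statement_3 {n : ℕ} (P : Fin n → Fin n → Prop) (hP : IsPartialOrderRel P) :
    IsLinearOrderRel P ↔ IsChainRel (fun i j : Fin n => i = j ∨ P i j) := by
  obtain ⟨hirr, htr⟩ := hP
  constructor
  · rintro ⟨-, hlin⟩
    constructor
    · intro a a'
      by_cases hne : a = a'
      · subst hne; exact Or.inl fun b h => h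
      rcases hlin a a' hne with h | h
      · right
        rintro b (rfl | hb)
        · exact Or.inr h
        · exact Or.inr (htr _ _ _ h hb)
      · left
        rintro b (rfl | hb)
        · exact Or.inr h
        · exact Or.inr (htr _ _ _ h hb)
    · intro b b'
      by_cases hne : b = b'
      · subst hne; exact Or.inl fun a h => h
      rcases hlin b b' hne with h | h
      · left
        rintro a (rfl | ha)
        · exact Or.inr h
        · exact Or.inr (htr _ _ _ ha h)
      · right
        rintro a (rfl | ha)
        · exact Or.inr h
        · exact Or.inr (htr _ _ _ ha h)
  · rintro ⟨h1, -⟩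
    refine ⟨⟨hirr, htr⟩, fun x y hxy => ?_⟩
    rcases h1 x y with h | h
    · rcases h x (Or.inl rfl) with rfl | hp
      · exact absurd rfl hxy
      · exact Or.inr hp
    · rcases h y (Or.inl rfl) with rfl | hp
      · exact absurd rfl hxy.symm
      · exact Or.inl hp
end

section
/- Let Q_1 = (U,R_1) be an interval order and Q_2 = (U,R_2) be a partial order on the same finite set U, such that Q_1 and Q_2 do not contradict each other (there are no x, y ∈ U with x <_{Q_1} y and y <_{Q_2} x). Then there exists a linear order Q_0 on U that is a linear extension of both Q_1 and Q_2 (i.e., x <_{Q_1} y implies x <_{Q_0} y, and x <_{Q_2} y implies x <_{Q_0} y). -/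
open SimpleGraph

/-- Lemma: an interval order and a partial order that do not contradict
each other have a common linear extension. -/
theorem statement_4 {U : Type*} [Fintype U] (Q1 Q2 : U → U → Prop)
    (hQ1 : IsIntervalOrder Q1) (hQ2 : IsPartialOrderRel Q2)
    (hnc : ∀ x y : U, ¬ (Q1 x y ∧ Q2 y x)) :
    ∃ Q0 : U → U → Prop, IsLinearOrderRel Q0 ∧
      (∀ x y, Q1 x y → Q0 x y) ∧ (∀ x y, Q2 x y → Q0 x y) := by
  obtain ⟨l, r, hlr, hiv⟩ := hQ1
  obtain ⟨h2irr, h2trans⟩ := hQ2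
  set S : U → U → Prop := fun x y => Q1 x y ∨ Q2 x y with hS
  -- mixed forms
  set M : U → U → Prop := fun x y =>
    Q1 x y ∨ Q2 x y ∨ (∃ a, Q2 x a ∧ Q1 a y) ∨ (∃ b, Q1 x b ∧ Q2 b y) ∨
      (∃ a b, Q2 x a ∧ Q1 a b ∧ Q2 b y) with hM
  have q1trans : ∀ x y z, Q1 x y → Q1 y z → Q1 x z := by
    intro x y z hxy hyz
    rw [hiv] at *
    exact lt_of_lt_of_le hxy (le_trans (hlr y) hyz.le)
  have q121 : ∀ x y z w, Q1 x y → Q2 y z → Q1 z w → Q1 x w := by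
    intro x y z w hxy hyz hzw
    have hn : ¬ Q1 z y := fun h => hnc z y ⟨h, hyz⟩
    rw [hiv] at *
    exact lt_of_lt_of_le hxy (le_trans (not_lt.mp hn) hzw.le)
  have key : ∀ x y, Relation.TransGen S x y → M x y := by
    intro x y h
    induction h with
    | single h =>
      rcases h with h | h
      · exact Or.inl h
      · exact Or.inr (Or.inl h)
    | tail _ hstep ih =>
      rename_i b c _
      rcases hstep with h1 | h2
      · rcases ih with h | h | ⟨a, ha, hab⟩ | ⟨e, he, heb⟩ | ⟨a, e, ha, hae, heb⟩
        · exact Or.inl (q1trans _ _ _ h h1)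
        · exact Or.inr (Or.inr (Or.inl ⟨b, h, h1⟩))
        · exact Or.inr (Or.inr (Or.inl ⟨a, ha, q1trans _ _ _ hab h1⟩))
        · exact Or.inl (q121 _ _ _ _ he heb h1)
        · exact Or.inr (Or.inr (Or.inl ⟨a, ha, q121 _ _ _ _ hae heb h1⟩))
      · rcases ih with h | h | ⟨a, ha, hab⟩ | ⟨e, he, heb⟩ | ⟨a, e, ha, hae, heb⟩
        · exact Or.inr (Or.inr (Or.inr (Or.inl ⟨b, h, h2⟩)))
        · exact Or.inr (Or.inl (h2trans _ _ _ h h2))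
        · exact Or.inr (Or.inr (Or.inr (Or.inr ⟨a, b, ha, hab, h2⟩)))
        · exact Or.inr (Or.inr (Or.inr (Or.inl ⟨e, he, h2trans _ _ _ heb h2⟩)))
        · exact Or.inr (Or.inr (Or.inr (Or.inr ⟨a, e, ha, hae, h2trans _ _ _ heb h2⟩)))
  have q1irr : ∀ x, ¬ Q1 x x := by
    intro x h
    rw [hiv] at h
    exact absurd (hlr x) (not_le.mpr h)
  have hirr : ∀ x, ¬ Relation.TransGen S x x := by
    intro x h
    rcases key x x h with h | h | ⟨a, ha, hax⟩ | ⟨e, he, hex⟩ | ⟨a, e, ha, hae, hex⟩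
    · exact q1irr x h
    · exact h2irr x h
    · exact hnc a x ⟨hax, ha⟩
    · exact hnc x e ⟨he, hex⟩
    · exact hnc a e ⟨hae, h2trans _ _ _ hex ha⟩
  -- non-strict version
  set R : U → U → Prop := fun x y => x = y ∨ Relation.TransGen S x y with hR
  have : IsPartialOrder U R :=
    { refl := fun x => Or.inl rfl
      trans := by
        intro x y z hxy hyz
        rcases hxy with rfl | hxy
        · exact hyz
        rcases hyz with rfl | hyz
        · exact Or.inr hxy
        · exact Or.inr (hxy.trans hyz)
      antisymm := by
        intro x y hxy hyx
        rcases hxy with rfl | hxy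
        · rfl
        rcases hyx with rfl | hyx
        · rfl
        · exact absurd (hxy.trans hyx) (hirr x) }
  obtain ⟨s, hs, hsub⟩ := extend_partialOrder R
  refine ⟨fun x y => s x y ∧ x ≠ y, ⟨⟨fun x h => h.2 rfl, ?_⟩, ?_⟩, ?_, ?_⟩
  · intro x y z hxy hyz
    refine ⟨hs.trans _ _ _ hxy.1 hyz.1, fun h => ?_⟩
    subst h
    exact hxy.2 (hs.antisymm _ _ hxy.1 hyz.1)
  · intro x y hne
    rcases hs.total x y with h | h
    · exact Or.inl ⟨h, hne⟩
    · exact Or.inr ⟨h, hne.symm⟩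
  · intro x y h
    have ht : Relation.TransGen S x y := Relation.TransGen.single (Or.inl h)
    exact ⟨hsub x y (Or.inr ht), fun he => hirr x (he ▸ ht)⟩
  · intro x y h
    have ht : Relation.TransGen S x y := Relation.TransGen.single (Or.inr h)
    exact ⟨hsub x y (Or.inr ht), fun he => hirr x (he ▸ ht)⟩
end

section
/- Let P be a partial order on U = {u_1,…,u_n}, and in the bipartite complement Ĉ(P) of the domination bipartite graph C(P) let E_0 = {u_i v_i : 1 ≤ i ≤ n}. The following statements are equivalent: (a) P = P_1 ∩ P_2 (that is, u <_P u' iff u <_{P_1} u' and u <_{P_2} u') for some linear order P_1 and some interval order P_2 on U; (b) the edge set of Ĉ(P) is the union of the edge sets of N̂C(P_1) and Ĉ(P_2) for two partial orders P_1 and P_2 on U such that N̂C(P_1) and Ĉ(P_2) are chain graphs; (c) Ĉ(P) is linear-interval coverable. -/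
open SimpleGraph

lemma chainRel_congr {α β : Type*} {E E' : α → β → Prop} (h : ∀ a b, E a b ↔ E' a b)
    (hE : IsChainRel E) : IsChainRel E' := by
  constructor
  · intro a a'
    rcases hE.1 a a' with h1 | h1
    · exact Or.inl fun b hb => (h a' b).mp (h1 b ((h a b).mpr hb))
    · exact Or.inr fun b hb => (h a b).mp (h1 b ((h a' b).mpr hb))
  · intro b b'
    rcases hE.2 b b' with h1 | h1
    · exact Or.inl fun a ha => (h a b').mp (h1 a ((h a b).mpr ha))
    · exact Or.inr fun a ha => (h a b).mp (h1 a ((h a b').mpr ha))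

lemma chain_of_linear {n : ℕ} {P1 : Fin n → Fin n → Prop} (h : IsLinearOrderRel P1) :
    IsChainRel (fun i j : Fin n => ¬ (i = j ∨ P1 i j)) := by
  obtain ⟨⟨hirr, htr⟩, htot⟩ := h
  constructor
  · intro a a'
    by_cases hne : a = a'
    · subst hne; exact Or.inl fun b hb => hb
    rcases htot a a' hne with hle | hle
    · refine Or.inl fun b hb hb' => hb ?_
      rcases hb' with rfl | hb'
      · exact Or.inr hle
      · exact Or.inr (htr _ _ _ hle hb')
    · refine Or.inr fun b hb hb' => hb ?_
      rcases hb' with rfl | hb'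
      · exact Or.inr hle
      · exact Or.inr (htr _ _ _ hle hb')
  · intro b b'
    by_cases hne : b = b'
    · subst hne; exact Or.inl fun a ha => ha
    rcases htot b b' hne with hle | hle
    · refine Or.inr fun a ha ha' => ha ?_
      rcases ha' with rfl | ha'
      · exact Or.inr hle
      · exact Or.inr (htr _ _ _ ha' hle)
    · refine Or.inl fun a ha ha' => ha ?_
      rcases ha' with rfl | ha'
      · exact Or.inr hle
      · exact Or.inr (htr _ _ _ ha' hle)

lemma linear_of_chain {n : ℕ} {P1 : Fin n → Fin n → Prop} (hp : IsPartialOrderRel P1)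
    (hc : IsChainRel (fun i j : Fin n => ¬ (i = j ∨ P1 i j))) : IsLinearOrderRel P1 := by
  refine ⟨hp, fun a a' hne => ?_⟩
  rcases hc.1 a a' with h1 | h1
  · left
    by_contra hn
    exact h1 a' (fun hh => hh.elim hne hn) (Or.inl rfl)
  · right
    by_contra hn
    exact h1 a (fun hh => hh.elim (fun e => hne e.symm) hn) (Or.inl rfl)

lemma partial_of_interval {U : Type*} {P2 : U → U → Prop} (h : IsIntervalOrder P2) :
    IsPartialOrderRel P2 := by
  obtain ⟨l, r, hlr, hiff⟩ := h
  constructor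
  · intro x hx
    exact absurd (lt_of_lt_of_le ((hiff x x).mp hx) (hlr x)) (lt_irrefl _)
  · intro x y z hxy hyz
    exact (hiff x z).mpr (lt_of_lt_of_le ((hiff x y).mp hxy)
      (le_trans (hlr y) (le_of_lt ((hiff y z).mp hyz))))

lemma chain_of_interval {n : ℕ} {P2 : Fin n → Fin n → Prop} (h : IsIntervalOrder P2) :
    IsChainRel (fun i j : Fin n => ¬ P2 i j) := by
  obtain ⟨l, r, hlr, hiff⟩ := h
  constructor
  · intro a a'
    rcases le_total (r a) (r a') with hle | hle
    · exact Or.inl fun b hb hb' => hb ((hiff a b).mpr (lt_of_le_of_lt hle ((hiff a' b).mp hb')))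
    · exact Or.inr fun b hb hb' => hb ((hiff a' b).mpr (lt_of_le_of_lt hle ((hiff a b).mp hb')))
  · intro b b'
    rcases le_total (l b) (l b') with hle | hle
    · exact Or.inr fun a ha ha' => ha ((hiff a b').mpr (lt_of_lt_of_le ((hiff a b).mp ha') hle))
    · exact Or.inl fun a ha ha' => ha ((hiff a b).mpr (lt_of_lt_of_le ((hiff a b').mp ha') hle))


open Finset in
lemma intervalOrder_of_downsets {n : ℕ} {Q : Fin n → Fin n → Prop}
    (hQ : IsPartialOrderRel Q)
    (hdown : ∀ b b' : Fin n, (∀ a, Q a b → Q a b') ∨ (∀ a, Q a b' → Q a b)) :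
    IsIntervalOrder Q := by
  classical
  obtain ⟨hirr, htr⟩ := hQ
  set Ds : Fin n → Finset (Fin n) := fun b => univ.filter (fun a => Q a b) with hDs
  set lN : Fin n → ℕ := fun b => (univ.filter (fun z => Ds z ⊂ Ds b)).card with hlN
  have hmemDs : ∀ a b, a ∈ Ds b ↔ Q a b := by
    intro a b; simp [hDs]
  have hmono : ∀ {y y' : Fin n}, Ds y ⊂ Ds y' → lN y < lN y' := by
    intro y y' hss
    apply Finset.card_lt_card
    have hsub : univ.filter (fun z => Ds z ⊂ Ds y) ⊆ univ.filter (fun z => Ds z ⊂ Ds y') := by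
      intro z hz
      simp only [mem_filter, mem_univ, true_and] at hz ⊢
      exact lt_of_lt_of_le hz hss.subset
    refine (Finset.ssubset_iff_of_subset hsub).mpr ⟨y, ?_, ?_⟩
    · simp only [mem_filter, mem_univ, true_and]; exact hss
    · simp only [mem_filter, mem_univ, true_and]
      exact fun h => (lt_irrefl _ h)
  have hmono' : ∀ {y y' : Fin n}, Ds y ⊆ Ds y' → lN y ≤ lN y' := by
    intro y y' hss
    apply Finset.card_le_card
    intro z hz
    simp only [mem_filter, mem_univ, true_and] at hz ⊢
    exact lt_of_lt_of_le hz hss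
  have hDQ : ∀ {x y : Fin n}, Q x y → Ds x ⊂ Ds y := by
    intro x y hxy
    constructor
    · intro a ha
      rw [hmemDs] at ha ⊢
      exact htr _ _ _ ha hxy
    · intro hsub
      have := hsub ((hmemDs x y).mpr hxy)
      rw [hmemDs] at this
      exact hirr x this
  have hlNbound : ∀ y, lN y ≤ n := by
    intro y
    calc lN y ≤ (univ : Finset (Fin n)).card := Finset.card_le_card (filter_subset _ _)
    _ = n := by simp
  set succ : Fin n → Finset (Fin n) := fun x => univ.filter (fun y => Q x y) with hsucc
  refine ⟨fun x => (lN x : ℝ), fun x =>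
    if h : (succ x).Nonempty then ((((succ x).inf' h lN) : ℕ) : ℝ) - 1/2 else (n : ℝ), ?_, ?_⟩
  · intro x
    by_cases h : (succ x).Nonempty
    · simp only [dif_pos h]
      have hall : ∀ y ∈ succ x, lN x < lN y := by
        intro y hy
        simp only [hsucc, mem_filter, mem_univ, true_and] at hy
        exact hmono (hDQ hy)
      have : lN x + 1 ≤ (succ x).inf' h lN := by
        apply Finset.le_inf'
        intro y hy
        exact Nat.succ_le_of_lt (hall y hy)
      have : ((lN x : ℝ) + 1) ≤ ((((succ x).inf' h lN) : ℕ) : ℝ) := by exact_mod_cast this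
      linarith
    · simp only [dif_neg h]
      exact_mod_cast hlNbound x
  · intro x y
    constructor
    · intro hxy
      have hy : y ∈ succ x := by simp [hsucc, hxy]
      have h : (succ x).Nonempty := ⟨y, hy⟩
      simp only [dif_pos h]
      have h1 : (succ x).inf' h lN ≤ lN y := Finset.inf'_le _ hy
      have h1' : ((((succ x).inf' h lN) : ℕ) : ℝ) ≤ (lN y : ℝ) := by exact_mod_cast h1
      linarith
    · intro hxy
      by_cases h : (succ x).Nonempty
      · simp only [dif_pos h] at hxy
        have hle : (succ x).inf' h lN ≤ lN y := by
          have : ((((succ x).inf' h lN) : ℕ) : ℝ) < (lN y : ℝ) + 1 := by linarith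
          exact_mod_cast Nat.lt_succ_iff.mp (by exact_mod_cast this)
        obtain ⟨y0, hy0, heq⟩ := Finset.exists_mem_eq_inf' h lN
        simp only [hsucc, mem_filter, mem_univ, true_and] at hy0
        rw [heq] at hle
        rcases hdown y0 y with hcase | hcase
        · exact hcase x hy0
        · have hsub : Ds y ⊆ Ds y0 := by
            intro a ha
            rw [hmemDs] at ha ⊢
            exact hcase a ha
          by_cases hsub' : Ds y0 ⊆ Ds y
          · have := hsub' ((hmemDs x y0).mpr hy0)
            rwa [hmemDs] at this
          · have : Ds y ⊂ Ds y0 := ⟨hsub, hsub'⟩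
            exact absurd (hmono this) (not_lt.mpr hle)
      · simp only [dif_neg h] at hxy
        have := hlNbound y
        have : (lN y : ℝ) ≤ (n : ℝ) := by exact_mod_cast this
        linarith


open Finset in
lemma stC_aux {n : ℕ} {P : Fin n → Fin n → Prop} (hP : IsPartialOrderRel P)
    (h : LinearIntervalCoverable n (fun i j => ¬ P i j)) :
    ∃ P1 P2 : Fin n → Fin n → Prop,
      IsLinearOrderRel P1 ∧ IsPartialOrderRel P2 ∧
      IsChainRel (fun i j : Fin n => ¬ P2 i j) ∧
      (∀ i j, P i j → P1 i j) ∧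
      (∀ i j, P i j → P2 i j) ∧
      (∀ i j, P1 i j → P2 i j → P i j) := by
  classical
  obtain ⟨E1, E2, hc1, hc2, hun, hdiag⟩ := h
  obtain ⟨Pirr, Ptr⟩ := hP
  have hPE1 : ∀ {i j}, P i j → ¬ E1 i j := fun hp h1 => ((hun _ _).mpr (Or.inl h1)) hp
  have hPE2 : ∀ {i j}, P i j → ¬ E2 i j := fun hp h2 => ((hun _ _).mpr (Or.inr h2)) hp
  have hPback : ∀ {i j}, ¬ E1 i j → ¬ E2 i j → P i j := by
    intro i j h1 h2
    by_contra hnp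
    rcases (hun _ _).mp hnp with hh | hh
    exacts [h1 hh, h2 hh]
  set ρ : Fin n → ℕ := fun x => (univ.filter (fun j => E1 x j)).card with hρ
  have L1 : ∀ {a a' b : Fin n}, ¬ E1 a b → E1 a' b → ρ a < ρ a' := by
    intro a a' b hna ha'
    rcases hc1.1 a a' with hcase | hcase
    · apply Finset.card_lt_card
      have hsub : univ.filter (fun j => E1 a j) ⊆ univ.filter (fun j => E1 a' j) := by
        intro j hj
        simp only [mem_filter, mem_univ, true_and] at hj ⊢
        exact hcase j hj
      refine (Finset.ssubset_iff_of_subset hsub).mpr ⟨b, ?_, ?_⟩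
      · simp only [mem_filter, mem_univ, true_and]; exact ha'
      · simp only [mem_filter, mem_univ, true_and]; exact hna
    · exact absurd (hcase b ha') hna
  have E1tr : ∀ {x y z : Fin n}, E1 x y → E1 y z → E1 x z := by
    intro x y z hxy hyz
    rcases hc1.2 y z with hcase | hcase
    · exact hcase x hxy
    · exact absurd (hcase y hyz) (hdiag y).2
  have nE2tr : ∀ {x y z : Fin n}, ¬ E2 x y → ¬ E2 y z → ¬ E2 x z := by
    intro x y z hxy hyz hxz
    rcases hc2.1 x y with hcase | hcase
    · exact hyz (hcase z hxz)
    · exact hxy (hcase y (hdiag y).1)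
  set D : Fin n → Fin n → Prop := fun x y => E1 x y ∧ ¬ E2 x y with hD
  set S : Fin n → Fin n → Prop := fun x y => P x y ∨ D y x with hS
  set G : Fin n → Fin n → Prop := fun x b => x = b ∨ P x b ∨
    (∃ b1 u a', P x b1 ∧ E1 u b1 ∧ ρ u ≤ ρ a' ∧ P a' b) ∨
    (∃ w a', E1 w x ∧ ρ w ≤ ρ a' ∧ P a' b) with hG
  set Inv : Fin n → Fin n → Prop := fun x y =>
    P x y ∨ (∃ b, D y b ∧ G x b) ∨ (∃ a b, P a y ∧ D a b ∧ G x b) with hInvDef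
  have Gup : ∀ {x b a y : Fin n}, G x b → D a b → P a y → G x y := by
    intro x b a y hg hd hay
    rcases hg with rfl | hpxb | ⟨b1, u, a', h1, h2, h3, h4⟩ | ⟨w, a', h1, h2, h3⟩
    · exact Or.inr (Or.inr (Or.inr ⟨a, a, hd.1, le_refl _, hay⟩))
    · exact Or.inr (Or.inr (Or.inl ⟨b, a, a, hpxb, hd.1, le_refl _, hay⟩))
    · have hlt : ρ a' < ρ a := L1 (hPE1 h4) hd.1
      exact Or.inr (Or.inr (Or.inl ⟨b1, u, a, h1, h2, le_of_lt (lt_of_le_of_lt h3 hlt), hay⟩))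
    · have hlt : ρ a' < ρ a := L1 (hPE1 h3) hd.1
      exact Or.inr (Or.inr (Or.inr ⟨w, a, h1, le_of_lt (lt_of_le_of_lt h2 hlt), hay⟩))
  have step : ∀ {x y z : Fin n}, Inv x y → S y z → Inv x z := by
    intro x y z hinv hs
    rcases hs with hyz | hdzy
    · rcases hinv with hpxy | ⟨b, hd, hg⟩ | ⟨a, b, hpay, hd, hg⟩
      · exact Or.inl (Ptr _ _ _ hpxy hyz)
      · exact Or.inr (Or.inr ⟨y, b, hyz, hd, hg⟩)
      · exact Or.inr (Or.inr ⟨a, b, Ptr _ _ _ hpay hyz, hd, hg⟩)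
    · rcases hinv with hpxy | ⟨b, hd, hg⟩ | ⟨a, b, hpay, hd, hg⟩
      · exact Or.inr (Or.inl ⟨y, hdzy, Or.inr (Or.inl hpxy)⟩)
      · exact Or.inr (Or.inl ⟨b, ⟨E1tr hdzy.1 hd.1, nE2tr hdzy.2 hd.2⟩, hg⟩)
      · exact Or.inr (Or.inl ⟨y, hdzy, Gup hg hd hpay⟩)
  have close : ∀ {x : Fin n}, Inv x x → False := by
    intro x hinv
    rcases hinv with hp | ⟨b, hd, hg⟩ | ⟨a, b, hpax, hd, hg⟩
    · exact Pirr x hp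
    · rcases hg with rfl | hpxb | ⟨b1, u, a', h1, h2, h3, h4⟩ | ⟨w, a', h1, h2, h3⟩
      · exact (hdiag x).2 hd.1
      · exact hPE1 hpxb hd.1
      · have c1 : ρ a' < ρ x := L1 (hPE1 h4) hd.1
        have c2 : ρ x < ρ u := L1 (hPE1 h1) h2
        exact lt_irrefl _ (lt_trans (lt_of_lt_of_le c2 h3) c1)
      · have c1 : ρ a' < ρ x := L1 (hPE1 h3) hd.1
        have c2 : ρ x < ρ w := L1 (hdiag x).2 h1
        exact lt_irrefl _ (lt_trans (lt_of_lt_of_le c2 h2) c1)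
    · rcases hg with rfl | hpxb | ⟨b1, u, a', h1, h2, h3, h4⟩ | ⟨w, a', h1, h2, h3⟩
      · exact hPE1 hpax hd.1
      · exact hPE1 (Ptr _ _ _ hpax hpxb) hd.1
      · have c1 : ρ a' < ρ a := L1 (hPE1 h4) hd.1
        have c2 : ρ a < ρ u := L1 (hPE1 (Ptr _ _ _ hpax h1)) h2
        exact lt_irrefl _ (lt_trans (lt_of_lt_of_le c2 h3) c1)
      · have c1 : ρ a' < ρ a := L1 (hPE1 h3) hd.1
        have c2 : ρ a < ρ w := L1 (hPE1 hpax) h1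
        exact lt_irrefl _ (lt_trans (lt_of_lt_of_le c2 h2) c1)
  have hInv : ∀ {x y : Fin n}, Relation.TransGen S x y → Inv x y := by
    intro x y h
    induction h with
    | single hs =>
        rcases hs with hp | hd
        · exact Or.inl hp
        · exact Or.inr (Or.inl ⟨x, hd, Or.inl rfl⟩)
    | tail h1 hs ih => exact step ih hs
  have Tirr : ∀ x : Fin n, ¬ Relation.TransGen S x x := fun x h => close (hInv h)
  set le : Fin n → Fin n → Prop := fun x y => x = y ∨ Relation.TransGen S x y with hle
  haveI hpo : IsPartialOrder (Fin n) le :=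
    { refl := fun x => Or.inl rfl
      trans := by
        intro a b c hab hbc
        rcases hab with rfl | hab
        · exact hbc
        rcases hbc with rfl | hbc
        · exact Or.inr hab
        · exact Or.inr (hab.trans hbc)
      antisymm := by
        intro a b hab hba
        rcases hab with rfl | hab
        · rfl
        rcases hba with rfl | hba
        · rfl
        exact absurd (hab.trans hba) (Tirr a) }
  obtain ⟨s, hlin, hext⟩ := extend_partialOrder le
  haveI := hlin
  refine ⟨fun x y => s x y ∧ x ≠ y, fun i j => ¬ E2 i j, ?_, ?_, ?_, ?_, ?_, ?_⟩
  · -- P1 linear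
    refine ⟨⟨fun x hx => hx.2 rfl, ?_⟩, ?_⟩
    · intro x y z h1 h2
      refine ⟨Trans.trans h1.1 h2.1, fun he => ?_⟩
      subst he
      exact h1.2 (antisymm h1.1 h2.1)
    · intro x y hne
      rcases Std.Total.total (r := s) x y with hh | hh
      · exact Or.inl ⟨hh, hne⟩
      · exact Or.inr ⟨hh, hne.symm⟩
  · exact ⟨fun i hi => hi (hdiag i).1, fun x y z => nE2tr⟩
  · -- chain condition for the complement of P2
    exact chainRel_congr (fun a b => not_not.symm) hc2
  · -- P ⊆ P1
    intro i j hp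
    refine ⟨hext _ _ (Or.inr (Relation.TransGen.single (Or.inl hp))), fun he => ?_⟩
    subst he
    exact Pirr i hp
  · exact fun i j hp => hPE2 hp
  · -- P1 ∧ P2 → P
    intro i j h1 h2
    by_cases hE1 : E1 i j
    · exfalso
      have hs : s j i := hext _ _ (Or.inr (Relation.TransGen.single (Or.inr ⟨hE1, h2⟩)))
      exact h1.2 (antisymm h1.1 hs)
    · exact hPback hE1 h2


/-- Theorem: `P = P₁ ∩ P₂` for a linear order `P₁` and an interval order `P₂`
iff `Ĉ(P) = N̂C(P₁) ∪ Ĉ(P₂)` for chain graphs `N̂C(P₁)`, `Ĉ(P₂)` iff `Ĉ(P)` is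
linear-interval coverable.  Here `Ĉ(P)` is the bipartite graph `(i,j) ↦ ¬ P i j` and
`N̂C(P₁)` is `(i,j) ↦ ¬ (i = j ∨ P₁ i j)`. -/
theorem statement_5 {n : ℕ} (P : Fin n → Fin n → Prop) (hP : IsPartialOrderRel P) :
    ((∃ P1 P2 : Fin n → Fin n → Prop, IsLinearOrderRel P1 ∧ IsIntervalOrder P2 ∧
        ∀ i j, P i j ↔ P1 i j ∧ P2 i j) ↔
      (∃ P1 P2 : Fin n → Fin n → Prop, IsPartialOrderRel P1 ∧ IsPartialOrderRel P2 ∧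
        IsChainRel (fun i j : Fin n => ¬ (i = j ∨ P1 i j)) ∧
        IsChainRel (fun i j : Fin n => ¬ P2 i j) ∧
        ∀ i j, ¬ P i j ↔ (¬ (i = j ∨ P1 i j) ∨ ¬ P2 i j))) ∧
    ((∃ P1 P2 : Fin n → Fin n → Prop, IsPartialOrderRel P1 ∧ IsPartialOrderRel P2 ∧
        IsChainRel (fun i j : Fin n => ¬ (i = j ∨ P1 i j)) ∧
        IsChainRel (fun i j : Fin n => ¬ P2 i j) ∧
        ∀ i j, ¬ P i j ↔ (¬ (i = j ∨ P1 i j) ∨ ¬ P2 i j)) ↔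
      LinearIntervalCoverable n (fun i j => ¬ P i j)) := by
  classical
  have key_ab : ∀ (P1 P2 : Fin n → Fin n → Prop), IsPartialOrderRel P2 →
      (∀ i j, ¬ P i j ↔ (¬ (i = j ∨ P1 i j) ∨ ¬ P2 i j)) →
      ∀ i j, P i j ↔ P1 i j ∧ P2 i j := by
    intro P1 P2 hpo2 hedge i j
    have key : P i j ↔ ((i = j ∨ P1 i j) ∧ P2 i j) := by
      constructor
      · intro hp
        constructor
        · by_contra h1; exact (hedge i j).mpr (Or.inl h1) hp
        · by_contra h2; exact (hedge i j).mpr (Or.inr h2) hp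
      · rintro ⟨h1, h2⟩
        by_contra hnp
        rcases (hedge i j).mp hnp with hh | hh
        exacts [hh h1, hh h2]
    constructor
    · intro hp
      obtain ⟨h1, h2⟩ := key.mp hp
      rcases h1 with rfl | h1
      · exact absurd h2 (hpo2.1 i)
      · exact ⟨h1, h2⟩
    · rintro ⟨h1, h2⟩
      exact key.mpr ⟨Or.inr h1, h2⟩
  constructor
  · -- (a) ↔ (b)
    constructor
    · rintro ⟨P1, P2, hlin, hint, hiff⟩
      have hP2po := partial_of_interval hint
      refine ⟨P1, P2, hlin.1, hP2po, chain_of_linear hlin, chain_of_interval hint, ?_⟩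
      intro i j
      constructor
      · intro hnp
        by_cases h2 : P2 i j
        · refine Or.inl ?_
          rintro (rfl | h1)
          · exact hP2po.1 i h2
          · exact hnp ((hiff i j).mpr ⟨h1, h2⟩)
        · exact Or.inr h2
      · rintro (h | h) hp
        · exact h (Or.inr ((hiff i j).mp hp).1)
        · exact h ((hiff i j).mp hp).2
    · rintro ⟨P1, P2, hpo1, hpo2, hch1, hch2, hedge⟩
      have hlin : IsLinearOrderRel P1 := linear_of_chain hpo1 hch1
      have hdown : ∀ b b' : Fin n, (∀ a, P2 a b → P2 a b') ∨ (∀ a, P2 a b' → P2 a b) := by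
        intro b b'
        rcases hch2.2 b b' with hcase | hcase
        · exact Or.inr fun a ha => by
            by_contra hx
            exact hcase a hx ha
        · exact Or.inl fun a ha => by
            by_contra hx
            exact hcase a hx ha
      exact ⟨P1, P2, hlin, intervalOrder_of_downsets hpo2 hdown, key_ab P1 P2 hpo2 hedge⟩
  · -- (b) ↔ (c)
    constructor
    · rintro ⟨P1, P2, hpo1, hpo2, hch1, hch2, hedge⟩
      exact ⟨fun i j => ¬ (i = j ∨ P1 i j), fun i j => ¬ P2 i j, hch1, hch2, hedge,
        fun i => ⟨hpo2.1 i, fun hh => hh (Or.inl rfl)⟩⟩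
    · intro h
      obtain ⟨P1, P2, hlin, hpo2, hchain2, hPP1, hPP2, hP12⟩ := stC_aux hP h
      refine ⟨P1, P2, hlin.1, hpo2, chain_of_linear hlin, hchain2, ?_⟩
      intro i j
      constructor
      · intro hnp
        by_cases hij : i = j
        · subst hij
          exact Or.inr (hpo2.1 i)
        by_cases hp2 : P2 i j
        · refine Or.inl ?_
          rintro (rfl | h1)
          · exact hij rfl
          · exact hnp (hP12 i j h1 hp2)
        · exact Or.inr hp2
      · rintro (h1 | h1) hp
        · exact h1 (Or.inr (hPP1 i j hp))
        · exact h1 (hPP2 i j hp)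
end

section
/- In the Setting, if G̃ = Ĉ(P) is linear-interval coverable, then the conflict graph H* of H is bipartite, i.e., χ(H*) ≤ 2. -/
open SimpleGraph

lemma chain_no_2K2 {α β : Type*} {F : α → β → Prop} (h : IsChainRel F) {i1 i2 : α} {j1 j2 : β}
    (h11 : F i1 j1) (h22 : F i2 j2) (h12 : ¬ F i1 j2) (h21 : ¬ F i2 j1) : False := by
  rcases h.1 i1 i2 with h' | h'
  · exact h21 (h' _ h11)
  · exact h12 (h' _ h22)

/-- Lemma: if `G̃ = Ĉ(P)` is linear-interval coverable, then the conflict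
graph `H*` of the associated split graph `H` of `G̃` is bipartite, i.e. `χ(H*) ≤ 2`. -/
theorem statement_6 {n : ℕ} (P : Fin n → Fin n → Prop) (hP : IsPartialOrderRel P)
    (hcov : LinearIntervalCoverable n (fun i j => ¬ P i j)) :
    ConflictGraphBipartite (paperH P) := by
  classical
  obtain ⟨E1, E2, hc1, hc2, hE, _⟩ := hcov
  refine ⟨Sym2.lift ⟨fun x y => match x, y with
    | Sum.inl i, Sum.inr j => decide (E1 i j)
    | Sum.inr j, Sum.inl i => decide (E1 i j)
    | _, _ => false, ?_⟩, ?_⟩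
  · rintro (i | j) (i' | j') <;> rfl
  · rintro e f ⟨a, b, c, d, rfl, rfl, hab, hcd, had, hbc, hac, had', hbc', hbd⟩
    -- all endpoint patterns
    match a, b, c, d with
    | Sum.inl a, Sum.inl b, _, _ => exact hab.elim
    | _, _, Sum.inl c, Sum.inl d => exact hcd.elim
    | Sum.inr a, Sum.inr b, Sum.inl c, Sum.inr d =>
        exact (had' (congrArg Sum.inr (not_ne_iff.mp had))).elim
    | Sum.inr a, Sum.inr b, Sum.inr c, Sum.inl d =>
        exact (hbc' (congrArg Sum.inr (not_ne_iff.mp hbc))).elim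
    | Sum.inr a, Sum.inr b, Sum.inr c, Sum.inr d =>
        exact (hbc' (congrArg Sum.inr (not_ne_iff.mp hbc))).elim
    | Sum.inl a, Sum.inr b, Sum.inr c, Sum.inl d =>
        exact (hbc' (congrArg Sum.inr (not_ne_iff.mp hbc))).elim
    | Sum.inl a, Sum.inr b, Sum.inr c, Sum.inr d =>
        exact (hbc' (congrArg Sum.inr (not_ne_iff.mp hbc))).elim
    | Sum.inr a, Sum.inl b, Sum.inr c, Sum.inr d =>
        exact (had' (congrArg Sum.inr (not_ne_iff.mp had))).elim
    | Sum.inr a, Sum.inl b, Sum.inl c, Sum.inr d =>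
        exact (had' (congrArg Sum.inr (not_ne_iff.mp had))).elim
    | Sum.inl i1, Sum.inr j1, Sum.inl i2, Sum.inr j2 =>
      have h11 : ¬ P i1 j1 := hab
      have h22 : ¬ P i2 j2 := hcd
      have h12 : P i1 j2 := not_not.mp had
      have h21 : P i2 j1 := not_not.mp hbc
      simp only [Sym2.lift_mk, ne_eq, decide_eq_decide]
      intro hiff
      by_cases h1 : E1 i1 j1
      · have h2 : E1 i2 j2 := hiff.mp h1
        refine chain_no_2K2 hc1 h1 h2 ?_ ?_
        · exact fun h => ((hE i1 j2).mpr (Or.inl h)) h12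
        · exact fun h => ((hE i2 j1).mpr (Or.inl h)) h21
      · have h2 : ¬ E1 i2 j2 := fun h => h1 (hiff.mpr h)
        have e1 : E2 i1 j1 := ((hE i1 j1).mp h11).resolve_left h1
        have e2 : E2 i2 j2 := ((hE i2 j2).mp h22).resolve_left h2
        refine chain_no_2K2 hc2 e1 e2 ?_ ?_
        · exact fun h => ((hE i1 j2).mpr (Or.inr h)) h12
        · exact fun h => ((hE i2 j1).mpr (Or.inr h)) h21
    | Sum.inr j1, Sum.inl i1, Sum.inr j2, Sum.inl i2 =>
      have h11 : ¬ P i1 j1 := hab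
      have h22 : ¬ P i2 j2 := hcd
      have h12 : P i1 j2 := not_not.mp hbc
      have h21 : P i2 j1 := not_not.mp had
      simp only [Sym2.lift_mk, ne_eq, decide_eq_decide]
      intro hiff
      by_cases h1 : E1 i1 j1
      · have h2 : E1 i2 j2 := hiff.mp h1
        refine chain_no_2K2 hc1 h1 h2 ?_ ?_
        · exact fun h => ((hE i1 j2).mpr (Or.inl h)) h12
        · exact fun h => ((hE i2 j1).mpr (Or.inl h)) h21
      · have h2 : ¬ E1 i2 j2 := fun h => h1 (hiff.mpr h)
        have e1 : E2 i1 j1 := ((hE i1 j1).mp h11).resolve_left h1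
        have e2 : E2 i2 j2 := ((hE i2 j2).mp h22).resolve_left h2
        refine chain_no_2K2 hc2 e1 e2 ?_ ?_
        · exact fun h => ((hE i1 j2).mpr (Or.inr h)) h12
        · exact fun h => ((hE i2 j1).mpr (Or.inr h)) h21
end

section
/- In the Setting, assume H* is bipartite and fix a proper 2-coloring χ_0 of the vertices of H*. Let v_1,…,v_6 be an AP_6 of H whose edges v_2v_3, v_4v_5, v_6v_1 carry the literals ℓ_1, ℓ_2, ℓ_3 respectively, where no two of ℓ_1, ℓ_2, ℓ_3 are negations of each other. Then for every edge e of H with ℓ_e = ℓ_2, there exists an AP_6 w_1,…,w_6 in H with {w_1,w_2} = {v_1,v_2} (the non-edge v_1v_2 is its base) and w_4w_5 = e (e is its ceiling), such that ℓ_{w_2w_3} = ℓ_1, ℓ_{w_4w_5} = ℓ_2 and ℓ_{w_6w_1} = ℓ_3. -/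
open SimpleGraph

/-! ### Auxiliary machinery for `statement_11` -/

namespace Statement11Aux

/-- An abstract "cross system": a symmetric conflict relation `Conf` on a type `W`
with a proper 2-coloring `chi`, a family of cross pairs `m x y` which are edges
iff `¬ E x y`, a characterization of conflicts between cross edges, and the fact
that anything conflicting a cross edge is a cross edge. -/
structure Sys (W : Type*) (ι : Type*) (κ : Type*) where
  Conf : W → W → Prop
  chi : W → Bool
  E : ι → κ → Prop
  m : ι → κ → W
  hsym : Symmetric Conf
  hprop : ∀ e f, Conf e f → chi e ≠ chi f
  hchar : ∀ {x g : ι} {y h : κ}, ¬ E x y → ¬ E g h →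
    (Conf (m x y) (m g h) ↔ x ≠ g ∧ y ≠ h ∧ E x h ∧ E g y)
  hcross : ∀ {x : ι} {y : κ} {f : W}, ¬ E x y → Conf (m x y) f →
    ∃ g h, ¬ E g h ∧ f = m g h

namespace Sys

variable {W ι κ : Type*}

def RT (S : Sys W ι κ) : W → W → Prop := Relation.ReflTransGen S.Conf

def Opp (S : Sys W ι κ) (e f : W) : Prop := S.RT e f ∧ S.chi e ≠ S.chi f

def Sam (S : Sys W ι κ) (e f : W) : Prop := S.RT e f ∧ S.chi e = S.chi f

variable {S : Sys W ι κ}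

lemma rt_symm {e f : W} (h : S.RT e f) : S.RT f e :=
  by
    haveI : Std.Symm S.Conf := ⟨fun a b hab => S.hsym hab⟩
    have hs : Std.Symm (Relation.ReflTransGen S.Conf) := Relation.ReflTransGen.symmetric
    exact hs.symm _ _ h

lemma sam_refl {e : W} : S.Sam e e := ⟨Relation.ReflTransGen.refl, rfl⟩

lemma sam_trans {e f g : W} (h1 : S.Sam e f) (h2 : S.Sam f g) : S.Sam e g :=
  ⟨h1.1.trans h2.1, h1.2.trans h2.2⟩

lemma bool2 {a b c : Bool} (h1 : a ≠ b) (h2 : b ≠ c) : a = c := by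
  cases a <;> cases b <;> cases c <;> simp_all

lemma bool3 {a b c d : Bool} (h1 : a ≠ b) (h2 : b ≠ c) (h3 : c ≠ d) : a ≠ d := by
  cases a <;> cases b <;> cases c <;> cases d <;> simp_all

lemma not_opp_transport {u v u' v' : W} (h : ¬ S.Opp u v)
    (hu : S.Sam u' u) (hv : S.Sam v' v) : ¬ S.Opp u' v' := by
  rintro ⟨hr, hc⟩
  refine h ⟨(rt_symm hu.1).trans (hr.trans hv.1), fun hev => hc ?_⟩
  rw [hu.2, hv.2, hev]

/-- The index form of an `AP₆` whose base is `(a1, b2)` and ceiling is `(a5, b4)`. -/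
structure AP (S : Sys W ι κ) (a1 a3 a5 : ι) (b2 b4 b6 : κ) : Prop where
  e12 : S.E a1 b2
  e34 : S.E a3 b4
  e56 : S.E a5 b6
  n32 : ¬ S.E a3 b2
  n54 : ¬ S.E a5 b4
  n16 : ¬ S.E a1 b6
  d13 : a1 ≠ a3
  d15 : a1 ≠ a5
  d35 : a3 ≠ a5
  d24 : b2 ≠ b4
  d26 : b2 ≠ b6
  d46 : b4 ≠ b6

/-- Two-step propagation lemma: pushing an `AP₆` along a path of two conflicts
from its ceiling yields a new `AP₆` with the same base, whose side edges carry
the same literals. -/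
lemma twostep {a1 a3 a5 g c : ι} {b2 b4 b6 h d : κ}
    (ap : S.AP a1 a3 a5 b2 b4 b6)
    (h12 : ¬ S.Opp (S.m a3 b2) (S.m a5 b4))
    (h23 : ¬ S.Opp (S.m a5 b4) (S.m a1 b6))
    (hgh : ¬ S.E g h) (hcd : ¬ S.E c d)
    (k1 : S.Conf (S.m a5 b4) (S.m g h))
    (k2 : S.Conf (S.m g h) (S.m c d)) :
    S.AP a1 g c b2 d h ∧ S.Sam (S.m g b2) (S.m a3 b2) ∧
      S.Sam (S.m a1 h) (S.m a1 b6) ∧ S.Sam (S.m c d) (S.m a5 b4) := by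
  obtain ⟨hag, hbh, Eah, Egb4⟩ := (S.hchar ap.n54 hgh).mp k1
  obtain ⟨hgc, hhd, Egd, Ech⟩ := (S.hchar hgh hcd).mp k2
  have F1 : ¬ S.E a5 b2 := by
    intro hE
    have k : S.Conf (S.m a3 b2) (S.m a5 b4) :=
      (S.hchar ap.n32 ap.n54).mpr ⟨ap.d35, ap.d24, ap.e34, hE⟩
    exact h12 ⟨Relation.ReflTransGen.single k, S.hprop _ _ k⟩
  have F2 : ¬ S.E a1 b4 := by
    intro hE
    have k : S.Conf (S.m a5 b4) (S.m a1 b6) :=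
      (S.hchar ap.n54 ap.n16).mpr ⟨ap.d15.symm, ap.d46, ap.e56, hE⟩
    exact h23 ⟨Relation.ReflTransGen.single k, S.hprop _ _ k⟩
  have D1 : h ≠ b2 := fun hh => F1 (hh ▸ Eah)
  have D2 : g ≠ a1 := fun hg => F2 (hg ▸ Egb4)
  -- the two auxiliary conflicts used several times
  have cAB : S.Conf (S.m a1 b4) (S.m a3 b2) :=
    (S.hchar F2 ap.n32).mpr ⟨ap.d13, ap.d24.symm, ap.e12, ap.e34⟩
  have cCD : S.Conf (S.m a5 b2) (S.m a1 b6) :=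
    (S.hchar F1 ap.n16).mpr ⟨ap.d15.symm, ap.d26, ap.e56, ap.e12⟩
  have D3 : ¬ S.E g b2 := by
    intro hE
    have c1 : S.Conf (S.m g h) (S.m a5 b2) :=
      (S.hchar hgh F1).mpr ⟨hag.symm, D1, hE, Eah⟩
    refine h23 ⟨((Relation.ReflTransGen.single k1).tail c1).tail cCD, ?_⟩
    exact bool3 (S.hprop _ _ k1) (S.hprop _ _ c1) (S.hprop _ _ cCD)
  have D4 : ¬ S.E a1 h := by
    intro hE
    have c1 : S.Conf (S.m g h) (S.m a1 b4) :=
      (S.hchar hgh F2).mpr ⟨D2, hbh.symm, Egb4, hE⟩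
    refine h12 ⟨rt_symm (((Relation.ReflTransGen.single k1).tail c1).tail cAB), ?_⟩
    exact (bool3 (S.hprop _ _ k1) (S.hprop _ _ c1) (S.hprop _ _ cAB)).symm
  have Dc : a1 ≠ c := fun hc => D4 (hc ▸ Ech)
  have Dd : b2 ≠ d := fun hd => D3 (hd ▸ Egd)
  refine ⟨⟨ap.e12, Egd, Ech, D3, hcd, D4, D2.symm, Dc, hgc, Dd, D1.symm, hhd.symm⟩,
    ?_, ?_, ?_⟩
  · have c1 : S.Conf (S.m g b2) (S.m a1 b4) :=
      (S.hchar D3 F2).mpr ⟨D2, ap.d24, Egb4, ap.e12⟩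
    exact ⟨(Relation.ReflTransGen.single c1).tail cAB,
      bool2 (S.hprop _ _ c1) (S.hprop _ _ cAB)⟩
  · have c1 : S.Conf (S.m a1 h) (S.m a5 b2) :=
      (S.hchar D4 F1).mpr ⟨ap.d15, D1, ap.e12, Eah⟩
    exact ⟨(Relation.ReflTransGen.single c1).tail cCD,
      bool2 (S.hprop _ _ c1) (S.hprop _ _ cCD)⟩
  · exact ⟨(Relation.ReflTransGen.single (S.hsym k2)).tail (S.hsym k1),
      bool2 ((S.hprop _ _ k2).symm) ((S.hprop _ _ k1).symm)⟩

/-- The induction invariant: an `AP₆` with base `(a1, b2)` and ceiling `(x, y)`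
whose three edges carry the original three literals. -/
def Good (S : Sys W ι κ) (a1 a3 a5 : ι) (b2 b4 b6 : κ)
    (x : ι) (y : κ) (A : ι) (B : κ) : Prop :=
  S.AP a1 A x b2 y B ∧ S.Sam (S.m A b2) (S.m a3 b2) ∧
    S.Sam (S.m a1 B) (S.m a1 b6) ∧ S.Sam (S.m x y) (S.m a5 b4)

lemma main {a1 a3 a5 : ι} {b2 b4 b6 : κ}
    (ap : S.AP a1 a3 a5 b2 b4 b6)
    (h12 : ¬ S.Opp (S.m a3 b2) (S.m a5 b4))
    (h23 : ¬ S.Opp (S.m a5 b4) (S.m a1 b6))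
    {f : W} (hf : S.RT (S.m a5 b4) f) :
    (S.chi f = S.chi (S.m a5 b4) →
      ∃ x y A B, f = S.m x y ∧ S.Good a1 a3 a5 b2 b4 b6 x y A B) ∧
    (S.chi f ≠ S.chi (S.m a5 b4) →
      ∃ g h x y A B, (¬ S.E g h) ∧ f = S.m g h ∧
        S.Good a1 a3 a5 b2 b4 b6 x y A B ∧ S.Conf (S.m x y) (S.m g h)) := by
  induction hf with
  | refl =>
    exact ⟨fun _ => ⟨a5, b4, a3, b6, rfl, ap, sam_refl, sam_refl, sam_refl⟩,
      fun hne => absurd rfl hne⟩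
  | @tail p f hp hs ih =>
    by_cases hcf : S.chi f = S.chi (S.m a5 b4)
    · refine ⟨fun _ => ?_, fun hne => absurd hcf hne⟩
      have hcp : S.chi p ≠ S.chi (S.m a5 b4) :=
        fun hEq => (S.hprop _ _ hs) (hEq.trans hcf.symm)
      obtain ⟨g, h, x, y, A, B, hgh, hpe, good, kxy⟩ := ih.2 hcp
      subst hpe
      obtain ⟨c, d, hcd, hfe⟩ := S.hcross hgh hs
      subst hfe
      obtain ⟨ap', s1, s3, s2⟩ := good
      have h12' : ¬ S.Opp (S.m A b2) (S.m x y) := not_opp_transport h12 s1 s2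
      have h23' : ¬ S.Opp (S.m x y) (S.m a1 B) := not_opp_transport h23 s2 s3
      obtain ⟨ap2, t1, t3, t2⟩ := twostep ap' h12' h23' hgh hcd kxy hs
      exact ⟨c, d, g, h, rfl, ap2, sam_trans t1 s1, sam_trans t3 s3, sam_trans t2 s2⟩
    · refine ⟨fun hh => absurd hh hcf, fun _ => ?_⟩
      have hcp : S.chi p = S.chi (S.m a5 b4) :=
        bool2 (S.hprop _ _ hs) hcf
      obtain ⟨x, y, A, B, hpe, good⟩ := ih.1 hcp
      subst hpe
      obtain ⟨c, d, hcd, hfe⟩ := S.hcross good.1.n54 hs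
      exact ⟨c, d, x, y, A, B, hcd, hfe, good, hfe ▸ hs⟩

lemma conclusion {a1 a3 a5 : ι} {b2 b4 b6 : κ}
    (ap : S.AP a1 a3 a5 b2 b4 b6)
    (h12 : ¬ S.Opp (S.m a3 b2) (S.m a5 b4))
    (h23 : ¬ S.Opp (S.m a5 b4) (S.m a1 b6))
    {e : W} (he : S.Sam e (S.m a5 b4)) :
    ∃ x y A B, e = S.m x y ∧ S.Good a1 a3 a5 b2 b4 b6 x y A B :=
  (main ap h12 h23 (rt_symm he.1)).1 he.2

end Sys

end Statement11Aux

namespace Statement11Aux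

section Inst

variable {V : Type*} {n : ℕ}

lemma conflict_symm {G : SimpleGraph V} : Symmetric (Sym2Conflict G) := by
  rintro e f ⟨a, b, c, d, he, hf, hab, hcd, nad, nbc, hac, had, hbc, hbd⟩
  exact ⟨c, d, a, b, hf, he, hcd, hab, fun h => nbc h.symm, fun h => nad h.symm,
    hac.symm, hbc.symm, had.symm, hbd.symm⟩

variable (P : Fin n → Fin n → Prop)

lemma conflict_char {x g y h : Fin n} (hxy : ¬ P x y) (hgh : ¬ P g h) :
    Sym2Conflict (paperH P) s(Sum.inl x, Sum.inr y) s(Sum.inl g, Sum.inr h) ↔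
      x ≠ g ∧ y ≠ h ∧ P x h ∧ P g y := by
  constructor
  · rintro ⟨a, b, c, d, he, hf, hab, hcd, nad, nbc, hac, had, hbc, hbd⟩
    rw [Sym2.eq_iff] at he hf
    rcases he with ⟨rfl, rfl⟩ | ⟨rfl, rfl⟩ <;> rcases hf with ⟨rfl, rfl⟩ | ⟨rfl, rfl⟩
    · exact ⟨fun hq => hac (by rw [hq]), fun hq => hbd (by rw [hq]),
        not_not.mp nad, not_not.mp nbc⟩
    · have hyh : y = h := not_not.mp nbc
      exact absurd (congrArg Sum.inr hyh) hbc
    · have hyh : y = h := not_not.mp nad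
      exact absurd (congrArg Sum.inr hyh) had
    · exact ⟨fun hq => hbd (by rw [hq]), fun hq => hac (by rw [hq]),
        not_not.mp nbc, not_not.mp nad⟩
  · rintro ⟨h1, h2, h3, h4⟩
    refine ⟨Sum.inl x, Sum.inr y, Sum.inl g, Sum.inr h, rfl, rfl, hxy, hgh,
      not_not_intro h3, not_not_intro h4, ?_, ?_, ?_, ?_⟩
    · exact fun hq => h1 (Sum.inl.injEq .. ▸ hq)
    · exact fun hq => Sum.inl_ne_inr hq
    · exact fun hq => Sum.inr_ne_inl hq
    · exact fun hq => h2 (Sum.inr.injEq .. ▸ hq)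

lemma conflict_cross {x y : Fin n} {f : Sym2 (Fin n ⊕ Fin n)} (hxy : ¬ P x y)
    (hc : Sym2Conflict (paperH P) s(Sum.inl x, Sum.inr y) f) :
    ∃ g h, ¬ P g h ∧ f = s(Sum.inl g, Sum.inr h) := by
  obtain ⟨a, b, c, d, he, hf, hab, hcd, nad, nbc, hac, had, hbc, hbd⟩ := hc
  subst hf
  rcases c with c | c <;> rcases d with d | d
  · exact hcd.elim
  · exact ⟨c, d, hcd, rfl⟩
  · -- both c inr, d inl
    exact ⟨d, c, hcd, Sym2.eq_swap⟩
  · -- c, d both inr : contradiction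
    rw [Sym2.eq_iff] at he
    rcases he with ⟨rfl, rfl⟩ | ⟨rfl, rfl⟩
    · have hyc : y = c := not_not.mp nbc
      exact absurd (congrArg Sum.inr hyc) hbc
    · have hyd : y = d := not_not.mp nad
      exact absurd (congrArg Sum.inr hyd) had

variable (χ : Sym2 (Fin n ⊕ Fin n) → Bool) (hχ : ProperConflictColoring (paperH P) χ)

/-- The cross system of `paperH P` with `U` on the left. -/
def sysA : Sys (Sym2 (Fin n ⊕ Fin n)) (Fin n) (Fin n) where
  Conf := Sym2Conflict (paperH P)
  chi := χ
  E := P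
  m x y := s(Sum.inl x, Sum.inr y)
  hsym := conflict_symm
  hprop := hχ
  hchar := fun hxy hgh => conflict_char P hxy hgh
  hcross := fun hxy hc => conflict_cross P hxy hc

/-- The cross system of `paperH P` with `V` on the left (mirror form). -/
def sysB : Sys (Sym2 (Fin n ⊕ Fin n)) (Fin n) (Fin n) where
  Conf := Sym2Conflict (paperH P)
  chi := χ
  E := fun b a => P a b
  m := fun b a => s(Sum.inl a, Sum.inr b)
  hsym := conflict_symm
  hprop := hχ
  hchar := fun hxy hgh => by
    rw [conflict_char P hxy hgh]; tauto
  hcross := fun hxy hc => by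
    obtain ⟨g, h, hgh, hf⟩ := conflict_cross P hxy hc
    exact ⟨h, g, hgh, hf⟩

end Inst

end Statement11Aux

/-- Lemma: extension of an `AP₆` with the same base and a prescribed
ceiling carrying the same literals. -/
theorem statement_11 {n : ℕ} (P : Fin n → Fin n → Prop) (hP : IsPartialOrderRel P)
    (χ : Sym2 (Fin n ⊕ Fin n) → Bool) (hχ : ProperConflictColoring (paperH P) χ)
    (v1 v2 v3 v4 v5 v6 : Fin n ⊕ Fin n)
    (hdist : List.Pairwise (· ≠ ·) [v1, v2, v3, v4, v5, v6])
    (hAP6 : IsAC6 (paperH P) v1 v2 v3 v4 v5 v6)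
    (h12 : ¬ OppLit (paperH P) χ s(v2, v3) s(v4, v5))
    (h13 : ¬ OppLit (paperH P) χ s(v2, v3) s(v6, v1))
    (h23 : ¬ OppLit (paperH P) χ s(v4, v5) s(v6, v1))
    (e : Sym2 (Fin n ⊕ Fin n)) (he : e ∈ (paperH P).edgeSet)
    (hle : SameLit (paperH P) χ e s(v4, v5)) :
    ∃ w1 w2 w3 w4 w5 w6 : Fin n ⊕ Fin n,
      List.Pairwise (· ≠ ·) [w1, w2, w3, w4, w5, w6] ∧
      IsAC6 (paperH P) w1 w2 w3 w4 w5 w6 ∧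
      s(w1, w2) = s(v1, v2) ∧ s(w4, w5) = e ∧
      SameLit (paperH P) χ s(w2, w3) s(v2, v3) ∧
      SameLit (paperH P) χ s(w4, w5) s(v4, v5) ∧
      SameLit (paperH P) χ s(w6, w1) s(v6, v1) := by
  classical
  obtain ⟨n12, n34, n56, a23, a45, a61⟩ := hAP6
  simp only [List.pairwise_cons, List.mem_cons, List.mem_singleton, List.not_mem_nil,
    forall_eq_or_imp, forall_eq] at hdist
  obtain ⟨⟨d12, d13, d14, d15, d16, -⟩, ⟨d23, d24, d25, d26, -⟩, ⟨d34, d35, d36, -⟩,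
    ⟨d45, d46, -⟩, ⟨d56, -⟩, -⟩ := hdist
  rcases v1 with a1 | b1
  · -- Case A : `v1 ∈ U`, pattern U V U V U V (odd positions in U)
    rcases v6 with t | b6
    · exact a61.elim
    rcases v5 with a5 | t
    swap
    · exact (n56 (fun hq => d56 (congrArg Sum.inr hq))).elim
    rcases v4 with t | b4
    · exact a45.elim
    rcases v3 with a3 | t
    swap
    · exact (n34 (fun hq => d34 (congrArg Sum.inr hq))).elim
    rcases v2 with t | b2
    · exact a23.elim
    have ap : (Statement11Aux.sysA P χ hχ).AP a1 a3 a5 b2 b4 b6 :=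
      ⟨not_not.mp n12, not_not.mp n34, not_not.mp n56, a23, a45, a61,
        fun hq => d13 (congrArg Sum.inl hq), fun hq => d15 (congrArg Sum.inl hq),
        fun hq => d35 (congrArg Sum.inl hq), fun hq => d24 (congrArg Sum.inr hq),
        fun hq => d26 (congrArg Sum.inr hq), fun hq => d46 (congrArg Sum.inr hq)⟩
    have m1 : s(Sum.inr b2, Sum.inl a3) = (Statement11Aux.sysA P χ hχ).m a3 b2 :=
      Sym2.eq_swap
    have m2 : s(Sum.inr b4, Sum.inl a5) = (Statement11Aux.sysA P χ hχ).m a5 b4 :=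
      Sym2.eq_swap
    have m3 : s(Sum.inr b6, Sum.inl a1) = (Statement11Aux.sysA P χ hχ).m a1 b6 :=
      Sym2.eq_swap
    have h12' : ¬ (Statement11Aux.sysA P χ hχ).Opp
        ((Statement11Aux.sysA P χ hχ).m a3 b2) ((Statement11Aux.sysA P χ hχ).m a5 b4) := by
      rw [← m1, ← m2]; exact h12
    have h23' : ¬ (Statement11Aux.sysA P χ hχ).Opp
        ((Statement11Aux.sysA P χ hχ).m a5 b4) ((Statement11Aux.sysA P χ hχ).m a1 b6) := by
      rw [← m2, ← m3]; exact h23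
    have hse : (Statement11Aux.sysA P χ hχ).Sam e ((Statement11Aux.sysA P χ hχ).m a5 b4) := by
      rw [← m2]; exact hle
    obtain ⟨x, y, A, B, heq, ap', s1, s3, s2⟩ :=
      Statement11Aux.Sys.conclusion ap h12' h23' hse
    refine ⟨Sum.inl a1, Sum.inr b2, Sum.inl A, Sum.inr y, Sum.inl x, Sum.inr B,
      ?_, ?_, rfl, Sym2.eq_swap.trans heq.symm, ?_, ?_, ?_⟩
    · simp only [List.pairwise_cons, List.mem_cons, List.mem_singleton, List.not_mem_nil,
        forall_eq_or_imp, forall_eq, ne_eq, Sum.inl.injEq, Sum.inr.injEq, reduceCtorEq,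
        not_false_eq_true, and_true, true_and, List.Pairwise.nil, false_implies,
        implies_true]
      exact ⟨⟨ap'.d13, ap'.d15⟩, ⟨ap'.d24, ap'.d26⟩, ap'.d35, ap'.d46⟩
    · exact ⟨fun hq => hq ap'.e12, fun hq => hq ap'.e34, fun hq => hq ap'.e56,
        ap'.n32, ap'.n54, ap'.n16⟩
    · rw [show s(Sum.inr b2, Sum.inl A) = (Statement11Aux.sysA P χ hχ).m A b2 from
        Sym2.eq_swap, m1]
      exact s1
    · rw [show s(Sum.inr y, Sum.inl x) = (Statement11Aux.sysA P χ hχ).m x y from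
        Sym2.eq_swap, m2]
      exact s2
    · rw [show s(Sum.inr B, Sum.inl a1) = (Statement11Aux.sysA P χ hχ).m a1 B from
        Sym2.eq_swap, m3]
      exact s3
  · -- Case B : `v1 ∈ V`, pattern V U V U V U
    rcases v2 with a2 | t
    swap
    · exact (n12 (fun hq => d12 (congrArg Sum.inr hq))).elim
    rcases v3 with t | b3
    · exact a23.elim
    rcases v4 with a4 | t
    swap
    · exact (n34 (fun hq => d34 (congrArg Sum.inr hq))).elim
    rcases v5 with t | b5
    · exact a45.elim
    rcases v6 with a6 | t
    swap
    · exact (n56 (fun hq => d56 (congrArg Sum.inr hq))).elim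
    have ap : (Statement11Aux.sysB P χ hχ).AP b1 b3 b5 a2 a4 a6 :=
      ⟨not_not.mp n12, not_not.mp n34, not_not.mp n56, a23, a45, a61,
        fun hq => d13 (congrArg Sum.inr hq), fun hq => d15 (congrArg Sum.inr hq),
        fun hq => d35 (congrArg Sum.inr hq), fun hq => d24 (congrArg Sum.inl hq),
        fun hq => d26 (congrArg Sum.inl hq), fun hq => d46 (congrArg Sum.inl hq)⟩
    have h12' : ¬ (Statement11Aux.sysB P χ hχ).Opp
        ((Statement11Aux.sysB P χ hχ).m b3 a2) ((Statement11Aux.sysB P χ hχ).m b5 a4) := h12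
    have h23' : ¬ (Statement11Aux.sysB P χ hχ).Opp
        ((Statement11Aux.sysB P χ hχ).m b5 a4) ((Statement11Aux.sysB P χ hχ).m b1 a6) := h23
    have hse : (Statement11Aux.sysB P χ hχ).Sam e ((Statement11Aux.sysB P χ hχ).m b5 a4) := hle
    obtain ⟨x, y, A, B, heq, ap', s1, s3, s2⟩ :=
      Statement11Aux.Sys.conclusion ap h12' h23' hse
    refine ⟨Sum.inr b1, Sum.inl a2, Sum.inr A, Sum.inl y, Sum.inr x, Sum.inl B,
      ?_, ?_, rfl, heq.symm, s1, s2, s3⟩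
    · simp only [List.pairwise_cons, List.mem_cons, List.mem_singleton, List.not_mem_nil,
        forall_eq_or_imp, forall_eq, ne_eq, Sum.inl.injEq, Sum.inr.injEq, reduceCtorEq,
        not_false_eq_true, and_true, true_and, List.Pairwise.nil, false_implies,
        implies_true]
      exact ⟨⟨ap'.d13, ap'.d15⟩, ⟨ap'.d24, ap'.d26⟩, ap'.d35, ap'.d46⟩
    · exact ⟨fun hq => hq ap'.e12, fun hq => hq ap'.e34, fun hq => hq ap'.e56,
        ap'.n32, ap'.n54, ap'.n16⟩
end

section
/- Let G=(U,V,E) be a bipartite graph and let H_G be the associated split graph of G. Then ch(G) = t(H_G). -/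
open SimpleGraph

lemma chain_threshold {α β : Type*} [Fintype α] [Fintype β] {E : α → β → Prop}
    (h : IsChainRel E) : IsThresholdGraph (assocSplitGraph E) := by
  classical
  set C : ℝ := (Fintype.card α : ℝ) + 2 with hC
  have hCpos : (0:ℝ) < C := by positivity
  set M : β → Finset α := fun b => Finset.univ.filter (fun a => E a b) with hM
  set t : α → ℕ := fun a =>
    if hne : (Finset.univ.filter (fun b => E a b)).Nonempty then
      (Finset.univ.filter (fun b => E a b)).inf' hne (fun b => (M b).card)
    else Fintype.card α + 1 with ht
  have ht1 : ∀ a, 1 ≤ t a := by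
    intro a
    by_cases hne : (Finset.univ.filter (fun b => E a b)).Nonempty
    · simp only [ht, dif_pos hne]
      apply Finset.le_inf'
      intro b hb
      simp only [Finset.mem_filter] at hb
      have : a ∈ M b := by simp [hM, hb.2]
      exact Finset.card_pos.mpr ⟨a, this⟩
    · simp [ht, dif_neg hne]
  have key : ∀ a b, E a b ↔ t a ≤ (M b).card := by
    intro a b
    constructor
    · intro hab
      have hne : (Finset.univ.filter (fun b => E a b)).Nonempty := ⟨b, by simp [hab]⟩
      simp only [ht, dif_pos hne]
      exact Finset.inf'_le _ (by simp [hab])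
    · intro hle
      by_cases hne : (Finset.univ.filter (fun b => E a b)).Nonempty
      · simp only [ht, dif_pos hne] at hle
        obtain ⟨b0, hb0, hb0eq⟩ := Finset.exists_mem_eq_inf' hne (fun b => (M b).card)
        simp only [Finset.mem_filter] at hb0
        rw [hb0eq] at hle
        have hmem : a ∈ M b0 := by simp [hM, hb0.2]
        rcases h.2 b0 b with hsub | hsub
        · exact hsub a hb0.2
        · have hsub' : M b ⊆ M b0 := by
            intro x hx
            simp only [hM, Finset.mem_filter, Finset.mem_univ, true_and] at hx ⊢
            exact hsub x hx
          have heq : M b = M b0 := Finset.eq_of_subset_of_card_le hsub' hle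
          have : a ∈ M b := heq ▸ hmem
          simpa [hM] using this
      · exfalso
        simp only [ht, dif_neg hne] at hle
        have hcard : (M b).card ≤ Fintype.card α := Finset.card_le_univ _
        omega
  have hdiv : ∀ x y : ℝ, ((1:ℝ) ≤ 1/2 - x/C + (1/2 + y/C)) ↔ x ≤ y := by
    intro x y
    have h1 : ((1:ℝ) ≤ 1/2 - x/C + (1/2 + y/C)) ↔ x/C ≤ y/C := by
      constructor <;> intro <;> linarith
    rw [h1, div_le_div_iff_of_pos_right hCpos]
  refine ⟨fun x => match x with
    | Sum.inl a => 1/2 - (t a : ℝ)/C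
    | Sum.inr b => 1/2 + ((M b).card : ℝ)/C, ?_⟩
  rintro (a | b) (a' | b') hne
  · simp only [assocSplitGraph]
    constructor
    · exact fun hfalse => hfalse.elim
    · intro hle
      have h1 := ht1 a
      have h2 := ht1 a'
      have hx : (1:ℝ) ≤ (t a : ℝ) := by exact_mod_cast h1
      have hy : (1:ℝ) ≤ (t a' : ℝ) := by exact_mod_cast h2
      have hd1 : (0:ℝ) < (t a : ℝ)/C := by positivity
      have hd2 : (0:ℝ) < (t a' : ℝ)/C := by positivity
      linarith
  · show E a b' ↔ _
    rw [key a b', hdiv]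
    exact_mod_cast Iff.rfl
  · show E a' b ↔ _
    rw [key a' b]
    have h1 : ((1:ℝ) ≤ 1/2 + ((M b).card : ℝ)/C + (1/2 - (t a' : ℝ)/C)) ↔
        (1:ℝ) ≤ 1/2 - (t a' : ℝ)/C + (1/2 + ((M b).card : ℝ)/C) := by
      constructor <;> intro <;> linarith
    rw [h1, hdiv]
    exact_mod_cast Iff.rfl
  · have hbb : b ≠ b' := fun hb => hne (by rw [hb])
    simp only [assocSplitGraph]
    constructor
    · intro _
      have hd1 : (0:ℝ) ≤ ((M b).card : ℝ)/C := div_nonneg (Nat.cast_nonneg _) hCpos.le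
      have hd2 : (0:ℝ) ≤ ((M b').card : ℝ)/C := div_nonneg (Nat.cast_nonneg _) hCpos.le
      linarith
    · exact fun _ => hbb

/-- Lemma: for a bipartite graph `G`, the chain cover number of `G` equals
the threshold cover number of its associated split graph `H_G`. -/
theorem statement_16 {α β : Type*} [Fintype α] [Fintype β] (E : α → β → Prop) :
    chainCoverNumber E = thresholdCoverNumber (assocSplitGraph E) := by
  unfold chainCoverNumber thresholdCoverNumber
  congr 1
  ext k
  simp only [Set.mem_setOf_eq]
  constructor
  · rintro ⟨hk, f, hchain, hcov⟩
    refine ⟨hk, fun i => assocSplitGraph (f i), fun i => chain_threshold (hchain i), ?_⟩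
    rintro (a | b) (a' | b')
    · simp [assocSplitGraph]
    · exact hcov a b'
    · exact hcov a' b
    · show b ≠ b' ↔ ∃ i : Fin k, b ≠ b'
      exact ⟨fun hb => ⟨⟨0, hk⟩, hb⟩, fun ⟨_, hb⟩ => hb⟩
  · rintro ⟨hk, T, hth, hcov⟩
    refine ⟨hk, fun i a b => (T i).Adj (Sum.inl a) (Sum.inr b), ?_, ?_⟩
    · intro i
      obtain ⟨w, hw⟩ := hth i
      constructor
      · intro a a'
        rcases le_total (w (Sum.inl a)) (w (Sum.inl a'))  with hle | hle
        · left; intro b hb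
          rw [hw _ _ (by simp)] at hb ⊢
          linarith
        · right; intro b hb
          rw [hw _ _ (by simp)] at hb ⊢
          linarith
      · intro b b'
        rcases le_total (w (Sum.inr b)) (w (Sum.inr b'))  with hle | hle
        · left; intro a ha
          rw [hw _ _ (by simp)] at ha ⊢
          linarith
        · right; intro a ha
          rw [hw _ _ (by simp)] at ha ⊢
          linarith
    · intro a b
      exact hcov (Sum.inl a) (Sum.inr b)
end

section
/- Let P be a partial order on the finite set U = {u_1,…,u_n}. Then P is an interval order if and only if the domination bipartite graph C(P) is a chain graph. -/
open SimpleGraph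

/-- Lemma: `P` is an interval order iff the domination bipartite graph
`C(P)` is a chain graph. -/
theorem statement_19 {n : ℕ} (P : Fin n → Fin n → Prop) (hP : IsPartialOrderRel P) :
    IsIntervalOrder P ↔ IsChainRel (fun i j : Fin n => P i j) := by
  classical
  obtain ⟨hirr, htrans⟩ := hP
  constructor
  · rintro ⟨l, r, hlr, hpr⟩
    constructor
    · intro a a'
      rcases le_total (r a') (r a) with h | h
      · left; intro b hb
        rw [hpr] at hb ⊢
        exact lt_of_le_of_lt h hb
      · right; intro b hb
        rw [hpr] at hb ⊢
        exact lt_of_le_of_lt h hb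
    · intro b b'
      rcases le_total (l b) (l b') with h | h
      · left; intro a ha
        rw [hpr] at ha ⊢
        exact lt_of_lt_of_le ha h
      · right; intro a ha
        rw [hpr] at ha ⊢
        exact lt_of_lt_of_le ha h
  · rintro ⟨-, hchain⟩
    -- down-set cardinality
    set D : Fin n → Finset (Fin n) := fun x => Finset.univ.filter (fun z => P z x) with hD
    set L : Fin n → ℕ := fun x => (D x).card with hL
    set S : Fin n → Finset (Fin n) := fun x => Finset.univ.filter (fun y => P x y) with hS
    -- key: if P x y' and ¬ P x y then L y < L y'
    have key : ∀ x y y', P x y' → ¬ P x y → L y < L y' := by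
      intro x y y' h1 h2
      rcases hchain y y' with hc | hc
      · apply Finset.card_lt_card
        constructor
        · intro z hz
          simp only [hD, Finset.mem_filter, Finset.mem_univ, true_and] at hz ⊢
          exact hc z hz
        · intro hsub
          have hx : x ∈ D y' := by
            simp only [hD, Finset.mem_filter, Finset.mem_univ, true_and]
            exact h1
          have := hsub hx
          simp only [hD, Finset.mem_filter, Finset.mem_univ, true_and] at this
          exact h2 this
      · exact absurd (hc x h1) h2
    have key2 : ∀ x y, P x y → L x < L y := by
      intro x y h
      apply Finset.card_lt_card
      constructor
      · intro z hz
        simp only [hD, Finset.mem_filter, Finset.mem_univ, true_and] at hz ⊢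
        exact htrans z x y hz h
      · intro hsub
        have hx : x ∈ D y := by
          simp only [hD, Finset.mem_filter, Finset.mem_univ, true_and]
          exact h
        have := hsub hx
        simp only [hD, Finset.mem_filter, Finset.mem_univ, true_and] at this
        exact hirr x this
    refine ⟨fun x => (L x : ℝ),
      fun x => if h : (S x).Nonempty then ((S x).inf' h (fun y => (L y : ℝ))) - 1/2
        else (n : ℝ), ?_, ?_⟩
    · intro x
      by_cases h : (S x).Nonempty
      · simp only [h, dif_pos]
        rw [le_sub_iff_add_le]
        apply le_of_lt
        rw [Finset.lt_inf'_iff]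
        intro y hy
        simp only [hS, Finset.mem_filter, Finset.mem_univ, true_and] at hy
        have := key2 x y hy
        have : (L x : ℝ) + 1 ≤ (L y : ℝ) := by exact_mod_cast this
        linarith
      · simp only [h, dif_neg, not_false_iff]
        have : L x ≤ n := by
          simpa [hL] using (Finset.card_le_card (Finset.subset_univ (D x))).trans
            (le_of_eq (by simp))
        exact_mod_cast this
    · intro x y
      constructor
      · intro hxy
        have hne : (S x).Nonempty := ⟨y, by simp [hS, hxy]⟩
        simp only [hne, dif_pos]
        have hmem : y ∈ S x := by simp [hS, hxy]
        have h1 : (S x).inf' hne (fun y => (L y : ℝ)) ≤ (L y : ℝ) :=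
          Finset.inf'_le _ hmem
        linarith
      · intro hr
        by_contra hxy
        by_cases h : (S x).Nonempty
        · simp only [h, dif_pos] at hr
          have : ∀ y' ∈ S x, (L y : ℝ) ≤ (L y' : ℝ) - 1 := by
            intro y' hy'
            simp only [hS, Finset.mem_filter, Finset.mem_univ, true_and] at hy'
            have := key x y y' hy' hxy
            have : (L y : ℝ) + 1 ≤ (L y' : ℝ) := by exact_mod_cast this
            linarith
          have h2 : (L y : ℝ) + 1 ≤ (S x).inf' h (fun y => (L y : ℝ)) := by
            rw [Finset.le_inf'_iff]
            intro y' hy'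
            have := this y' hy'
            linarith
          linarith
        · simp only [h, dif_neg, not_false_iff] at hr
          have : L y ≤ n := by
            simpa [hL] using (Finset.card_le_card (Finset.subset_univ (D y))).trans
              (le_of_eq (by simp))
          have : (L y : ℝ) ≤ (n : ℝ) := by exact_mod_cast this
          linarith
end
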